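/- Let (Q,+) be an NK-loop and let f, g, h be special endomorphisms of (Q,+). Then f + (g + h) = (f + g) + h, where addition of endomorphisms is pointwise. Moreover -f is a special endomorphism of (Q,+), f + (-f) = 0, and f + 0 = f. -/

import Mathlib

/- Preamble: NK-loops, written additively.
   A loop is a set with `+`, a neutral element `0`, and unique left/right
   solvability.  An NK-loop is a loop in which every element decomposes as
   `x = u + v = v + u` with `u` in the nucleus and `v` in the Moufang center.
   Every NK-loop is a diassociative Moufang loop, so every element has a
   (uniquely determined) two-sided inverse `-x`, which we include in the
   structure. -/

universe u

section Preamble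
variable {Q : Type u}

/-- `a` belongs to the nucleus `N(Q,+)`. -/
def inNucleus [Add Q] (a : Q) : Prop :=
  ∀ x y : Q, (a + x) + y = a + (x + y) ∧ (x + a) + y = x + (a + y) ∧
    (x + y) + a = x + (y + a)

/-- `a` belongs to the Moufang center `K(Q,+)`. -/
def inMoufangCenter [Add Q] (a : Q) : Prop :=
  ∀ x y : Q, (a + a) + (x + y) = (a + x) + (a + y)

/-- `a` belongs to the center `Z(Q,+) = N(Q,+) ∩ K(Q,+)`. -/
def inCenter [Add Q] (a : Q) : Prop := inNucleus a ∧ inMoufangCenter a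

/-- An NK-loop `(Q,+)`: a loop in which every element decomposes as a sum
    `x = u + v = v + u` with `u ∈ N(Q,+)` and `v ∈ K(Q,+)`. -/
class NKLoop (Q : Type u) extends Add Q, Zero Q, Neg Q where
  zero_add : ∀ x : Q, 0 + x = x
  add_zero : ∀ x : Q, x + 0 = x
  exu_left : ∀ a b : Q, ∃! x : Q, a + x = b
  exu_right : ∀ a b : Q, ∃! y : Q, y + a = b
  neg_add_cancel : ∀ x : Q, -x + x = 0
  add_neg_cancel : ∀ x : Q, x + -x = 0
  nk_decomp : ∀ x : Q, ∃ u v : Q, inNucleus u ∧ inMoufangCenter v ∧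
      x = u + v ∧ x = v + u

variable [Add Q] [Zero Q] [Neg Q]

/-- Natural multiple `n • x`. -/
def nsmulL : ℕ → Q → Q
  | 0, _ => 0
  | n + 1, x => x + nsmulL n x

/-- Integer multiple `m • x` (unambiguous by diassociativity). -/
def zsmulL : ℤ → Q → Q
  | Int.ofNat n, x => nsmulL n x
  | Int.negSucc n, x => -(nsmulL (n + 1) x)

/-- `f` is an endomorphism of `(Q,+)`. -/
def IsEndo (f : Q → Q) : Prop := ∀ x y : Q, f (x + y) = f x + f y

/-- `a` belongs to the center of the (commutative) subloop `(K(Q,+),+)`: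
    `a ∈ K(Q,+)` and `a` satisfies the nucleus conditions relative to
    elements of `K(Q,+)`. -/
def inCenterOfK (a : Q) : Prop :=
  inMoufangCenter a ∧ ∀ x y : Q, inMoufangCenter x → inMoufangCenter y →
    (a + x) + y = a + (x + y) ∧ (x + a) + y = x + (a + y) ∧
      (x + y) + a = x + (y + a)

/-- `f` is a special endomorphism of the NK-loop `(Q,+)`:
    `f(Q) ⊆ K(Q,+)`, the restriction of `f` to `K(Q,+)` is a quasicentral
    endomorphism of the (commutative) loop `(K(Q,+),+)`, and
    `f(N(Q,+)) ⊆ N(Q,+)`. -/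
def IsSpecial (f : Q → Q) : Prop :=
  IsEndo f ∧ (∀ x : Q, inMoufangCenter (f x)) ∧
  (∃ m : ℤ, ∀ x : Q, inMoufangCenter x → inCenterOfK (zsmulL m x + f x)) ∧
  (∀ x : Q, inNucleus x → inNucleus (f x))

/-- `f` satisfies condition (F): `-x + f(x) ∈ K(Q,+)` and
    `x + f(x) ∈ N(Q,+)` for all `x`. -/
def SatisfiesF (f : Q → Q) : Prop :=
  ∀ x : Q, inMoufangCenter (-x + f x) ∧ inNucleus (x + f x)

end Preamble

section Basics
variable {Q : Type u} [NKLoop Q]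

private lemma lza (x : Q) : 0 + x = x := NKLoop.zero_add x
private lemma laz (x : Q) : x + 0 = x := NKLoop.add_zero x
private lemma lna (x : Q) : -x + x = 0 := NKLoop.neg_add_cancel x
private lemma lan (x : Q) : x + -x = 0 := NKLoop.add_neg_cancel x

private lemma cancel_left {a b c : Q} (h : a + b = a + c) : b = c := by
  obtain ⟨w, _, hu⟩ := NKLoop.exu_left a (a + c)
  exact (hu b h).trans (hu c rfl).symm

private lemma cancel_right {a b c : Q} (h : b + a = c + a) : b = c := by
  obtain ⟨w, _, hu⟩ := NKLoop.exu_right a (c + a)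
  exact (hu b h).trans (hu c rfl).symm

private lemma negUnique {a b : Q} (h : a + b = 0) : b = -a :=
  cancel_left (h.trans (lan a).symm)

private lemma lnn (a : Q) : -(-a) = a :=
  (negUnique (lna a)).symm

private lemma lnz : -(0 : Q) = 0 := (negUnique (lza (0:Q))).symm

private lemma zeroK : inMoufangCenter (0 : Q) := by
  intro x y; rw [lza, lza, lza, lza]

private lemma zeroN : inNucleus (0 : Q) := by
  intro x y
  refine ⟨?_, ?_, ?_⟩
  · rw [lza, lza]
  · rw [laz, lza]
  · rw [laz, laz]

end Basics

section KLemmas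
variable {Q : Type u} [NKLoop Q] {a b : Q}

/-- (a+a)+y = a+(a+y) -/
private lemma k1 (ha : inMoufangCenter a) (y : Q) : (a + a) + y = a + (a + y) := by
  have := ha 0 y; rwa [lza, laz] at this

/-- (a+a)+y = (a+y)+a -/
private lemma k2 (ha : inMoufangCenter a) (y : Q) : (a + a) + y = (a + y) + a := by
  have := ha y 0; rwa [laz, laz] at this

/-- (a+a)+(-a+y) = a+y -/
private lemma k3 (ha : inMoufangCenter a) (y : Q) : (a + a) + (-a + y) = a + y := by
  have := ha (-a) y; rwa [lan, lza] at this

/-- (a+a)+(y+-a) = a+y -/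
private lemma k4 (ha : inMoufangCenter a) (y : Q) : (a + a) + (y + -a) = a + y := by
  have := ha y (-a); rwa [lan, laz] at this

/-- -a commutes with everything -/
private lemma negComm (ha : inMoufangCenter a) (y : Q) : -a + y = y + -a :=
  cancel_left ((k3 ha y).trans (k4 ha y).symm)

/-- a ∈ K commutes with everything -/
private lemma commK (ha : inMoufangCenter a) (t : Q) : a + t = t + a := by
  obtain ⟨y, hy, -⟩ := NKLoop.exu_left a t
  calc a + t = a + (a + y) := by rw [hy]
    _ = (a + a) + y := (k1 ha y).symm
    _ = (a + y) + a := k2 ha y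
    _ = t + a := by rw [hy]

/-- a + (-a + y) = y -/
private lemma ip1 (ha : inMoufangCenter a) (y : Q) : a + (-a + y) = y := by
  have h1 : (a + a) + (-a + y) = a + (a + (-a + y)) := k1 ha (-a + y)
  have h2 := k3 ha y
  exact cancel_left (h1.symm.trans h2)

/-- -a + (a + y) = y -/
private lemma ip2 (ha : inMoufangCenter a) (y : Q) : -a + (a + y) = y := by
  have := ip1 ha (a + y)
  exact cancel_left (this.trans rfl)

/-- (a+x)+y = (a+a)+(x+(-a+y)) -/
private lemma id6 (ha : inMoufangCenter a) (x y : Q) :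
    (a + x) + y = (a + a) + (x + (-a + y)) := by
  have := ha x (-a + y)
  rw [ip1 ha y] at this
  exact this.symm

/-- (a+a)+((-a+x)+y) = x+(a+y) -/
private lemma id7 (ha : inMoufangCenter a) (x y : Q) :
    (a + a) + ((-a + x) + y) = x + (a + y) := by
  have := ha (-a + x) y
  rwa [ip1 ha x] at this

/-- (a+a)+(-a+(-a+y)) = y -/
private lemma id8 (ha : inMoufangCenter a) (y : Q) :
    (a + a) + (-a + (-a + y)) = y := by
  have h1 : (a + a) + (-a + (-a + y)) = a + (a + (-a + (-a + y))) := k1 ha _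
  rw [ip1 ha (-a + y), ip1 ha y] at h1
  exact h1

/-- left alternative law for -a -/
private lemma leftAltNeg (ha : inMoufangCenter a) (y : Q) :
    (-a + -a) + y = -a + (-a + y) := by
  have h1 := id7 ha (-a) y
  rw [ip2 ha y] at h1
  exact cancel_left (h1.trans (id8 ha y).symm)

/-- -a ∈ K -/
private lemma negK (ha : inMoufangCenter a) : inMoufangCenter (-a) := by
  intro x y
  have h1 : (a + a) + ((-a + x) + (-a + y)) = x + y := by
    have := ha (-a + x) (-a + y)
    rwa [ip1 ha x, ip1 ha y] at this
  have h2 : (a + a) + ((-a + -a) + (x + y)) = x + y := by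
    rw [leftAltNeg ha (x + y)]
    exact id8 ha (x + y)
  exact cancel_left (h2.trans h1.symm)

/-- (-a+x)+(-a+y) = -a+(-a+(x+y)) -/
private lemma negPairs (ha : inMoufangCenter a) (x y : Q) :
    (-a + x) + (-a + y) = -a + (-a + (x + y)) := by
  rw [← negK ha x y, leftAltNeg ha]

/-- ((a+a)+(a+a))+u = (a+a)+((a+a)+u) -/
private lemma doubleAlt (ha : inMoufangCenter a) (u : Q) :
    ((a + a) + (a + a)) + u = (a + a) + ((a + a) + u) := by
  have e1 : (a + a) + (a + a) = a + (a + (a + a)) := k1 ha (a + a)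
  rw [e1, id6 ha (a + (a + a)) u, id6 ha (a + a) (-a + u), id8 ha u]

/-- a+a ∈ K -/
private lemma doubleK (ha : inMoufangCenter a) : inMoufangCenter (a + a) := by
  intro x y
  rw [k1 ha x, k1 ha y]
  rw [← ha (a + x) (a + y), ← ha x y, doubleAlt ha]

/-- -a + (-a + t) = -(a+a) + t -/
private lemma negDouble (ha : inMoufangCenter a) (t : Q) :
    -a + (-a + t) = -(a + a) + t := by
  have h1 := id8 ha t
  have h2 := ip1 (doubleK ha) t
  exact cancel_left (h1.trans h2.symm)

/-- K is closed under addition -/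
private lemma closureK (ha : inMoufangCenter a) (hb : inMoufangCenter b) :
    inMoufangCenter (a + b) := by
  intro x y
  have rhs : ((a + b) + x) + ((a + b) + y)
      = ((a + a) + (a + a)) + ((b + b) + (-a + (-a + (x + y)))) := by
    rw [id6 ha b x, id6 ha b y, ← doubleK ha (b + (-a + x)) (b + (-a + y)),
      ← hb (-a + x) (-a + y), negPairs ha]
  have e1 : (a + b) + (a + b) = (a + a) + (b + b) := (ha b b).symm
  have lhs : ((a + b) + (a + b)) + (x + y)
      = ((a + a) + (a + a)) + ((b + b) + (-a + (-a + (x + y)))) := by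
    rw [e1, id6 (doubleK ha) (b + b) (x + y), negDouble ha (x + y)]
  exact lhs.trans rhs.symm

end KLemmas

section KLemmas2
variable {Q : Type u} [NKLoop Q] {a b : Q}

/-- -(a+b) = -a + -b for a,b ∈ K -/
private lemma negAdd (ha : inMoufangCenter a) (hb : inMoufangCenter b) :
    -(a + b) = -a + -b := by
  have key : (a + b) + (-a + -b) = 0 := by
    rw [id6 ha b (-a + -b), negDouble ha (-b), negComm (doubleK ha) (-b),
      ip1 hb (-(a + a)), lan]
  exact (negUnique key).symm

end KLemmas2

section Powers
variable {Q : Type u} [NKLoop Q] {v : Q}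

private lemma nsmulK (hv : inMoufangCenter v) : ∀ n : ℕ, inMoufangCenter (nsmulL n v)
  | 0 => zeroK
  | n + 1 => closureK hv (nsmulK hv n)

private lemma zsmulK (hv : inMoufangCenter v) : ∀ m : ℤ, inMoufangCenter (zsmulL m v)
  | Int.ofNat n => nsmulK hv n
  | Int.negSucc n => negK (nsmulK hv (n + 1))

private lemma zsmulNeg (v : Q) : ∀ m : ℤ, zsmulL (-m) v = -(zsmulL m v)
  | Int.ofNat 0 => by
      show zsmulL 0 v = -(zsmulL 0 v)
      show (0 : Q) = -(0 : Q)
      exact lnz.symm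
  | Int.ofNat (n + 1) => by
      show zsmulL (Int.negSucc n) v = -(nsmulL (n + 1) v)
      rfl
  | Int.negSucc n => by
      show zsmulL (Int.ofNat (n + 1)) v = -(zsmulL (Int.negSucc n) v)
      show nsmulL (n + 1) v = -(-(nsmulL (n + 1) v))
      exact (lnn _).symm

/-- v + (j v) = (j+1) v -/
private lemma zsmulSucc (hv : inMoufangCenter v) : ∀ j : ℤ,
    v + zsmulL j v = zsmulL (j + 1) v
  | Int.ofNat n => by
      show v + nsmulL n v = zsmulL (Int.ofNat (n + 1)) v
      rfl
  | Int.negSucc 0 => by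
      show v + -(nsmulL 1 v) = zsmulL 0 v
      show v + -(v + 0) = (0 : Q)
      rw [laz, lan]
  | Int.negSucc (n + 1) => by
      show v + -(nsmulL (n + 2) v) = zsmulL (Int.negSucc n) v
      show v + -(v + nsmulL (n + 1) v) = -(nsmulL (n + 1) v)
      rw [negAdd hv (nsmulK hv (n + 1)), ip1 hv]

/-- -v + (j v) = (j-1) v -/
private lemma zsmulPred (hv : inMoufangCenter v) : ∀ j : ℤ,
    -v + zsmulL j v = zsmulL (j - 1) v
  | Int.ofNat 0 => by
      show -v + (0 : Q) = zsmulL (-1) v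
      show -v + (0 : Q) = -(v + (0 : Q))
      rw [laz, laz]
  | Int.ofNat (n + 1) => by
      show -v + (v + nsmulL n v) = zsmulL (Int.ofNat (n + 1) - 1) v
      have : (Int.ofNat (n + 1) : ℤ) - 1 = Int.ofNat n := by
        simp [Int.ofNat_eq_natCast]
      rw [this, ip2 hv]
      rfl
  | Int.negSucc n => by
      show -v + -(nsmulL (n + 1) v) = zsmulL (Int.negSucc n - 1) v
      have : (Int.negSucc n : ℤ) - 1 = Int.negSucc (n + 1) := by
        rw [Int.negSucc_eq, Int.negSucc_eq]; push_cast; ring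
      rw [this, ← negAdd hv (nsmulK hv (n + 1))]
      rfl

/-- integer power addition law -/
private lemma powAdd (hv : inMoufangCenter v) (i : ℤ) : ∀ j : ℤ,
    zsmulL i v + zsmulL j v = zsmulL (i + j) v := by
  induction i using Int.induction_on with
  | zero => intro j; show (0 : Q) + _ = _; rw [lza, Int.zero_add]
  | succ i IH =>
      intro j
      have e1 : zsmulL ((i : ℤ) + 1) v = v + zsmulL i v := (zsmulSucc hv i).symm
      have e2 : (zsmulL j v : Q) = v + zsmulL (j - 1) v := by
        rw [zsmulSucc hv (j - 1)]; congr 1; omega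
      rw [e1, e2, ← hv (zsmulL i v) (zsmulL (j - 1) v), IH (j - 1), k1 hv,
        zsmulSucc hv (i + (j - 1)), zsmulSucc hv (i + (j - 1) + 1)]
      congr 1; omega
  | pred i IH =>
      intro j
      have e1 : zsmulL (-(i : ℤ) - 1) v = -v + zsmulL (-(i : ℤ)) v := by
        rw [zsmulPred hv (-(i : ℤ))]
      have e2 : (zsmulL j v : Q) = -v + zsmulL (j + 1) v := by
        rw [zsmulPred hv (j + 1)]; congr 1; omega
      rw [e1, e2, ← negK hv (zsmulL (-(i : ℤ)) v) (zsmulL (j + 1) v),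
        IH (j + 1), leftAltNeg hv, zsmulPred hv (-(i : ℤ) + (j + 1)),
        zsmulPred hv (-(i : ℤ) + (j + 1) - 1)]
      congr 1; omega

end Powers

section CenterK
variable {Q : Type u} [NKLoop Q] {c x y a b : Q}

private lemma cK1 (hc : inCenterOfK c) (hx : inMoufangCenter x)
    (hy : inMoufangCenter y) : (c + x) + y = c + (x + y) :=
  (hc.2 x y hx hy).1

private lemma cKmid (hc : inCenterOfK c) (hx : inMoufangCenter x)
    (hy : inMoufangCenter y) : (x + c) + y = x + (c + y) :=
  (hc.2 x y hx hy).2.1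

private lemma cK3 (hc : inCenterOfK c) (hx : inMoufangCenter x)
    (hy : inMoufangCenter y) : (x + y) + c = x + (y + c) :=
  (hc.2 x y hx hy).2.2

/-- a + (b + c) = (a+b) + c for c relative-central, a b ∈ K -/
private lemma pullR (hc : inCenterOfK c) (ha : inMoufangCenter a)
    (hb : inMoufangCenter b) : a + (b + c) = (a + b) + c :=
  (cK3 hc ha hb).symm

/-- (a + c) + b = (a + b) + c -/
private lemma pull (hc : inCenterOfK c) (ha : inMoufangCenter a)
    (hb : inMoufangCenter b) : (a + c) + b = (a + b) + c := by
  rw [cKmid hc ha hb, commK hc.1 b, pullR hc ha hb]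

/-- -c is relative-central if c is -/
private lemma negCenterK (hc : inCenterOfK c) : inCenterOfK (-c) := by
  have hcK := hc.1
  refine ⟨negK hcK, ?_⟩
  intro x y hx hy
  set x' := -c + x with hx'def
  set y' := -c + y with hy'def
  have hx' : inMoufangCenter x' := closureK (negK hcK) hx
  have hy' : inMoufangCenter y' := closureK (negK hcK) hy
  have ex : x = c + x' := (ip1 hcK x).symm
  have ey : y = c + y' := (ip1 hcK y).symm
  have exc : x + -c = x' := by rw [← negComm hcK x]
  have eyc : y + -c = y' := by rw [← negComm hcK y]
  have exy : x + y = c + (x' + y) := by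
    rw [ex]; exact cK1 hc hx' hy
  have key1 : x' + y = c + (x' + y') := by
    calc x' + y = x' + (c + y') := by rw [← ey]
      _ = (x' + c) + y' := (cKmid hc hx' hy').symm
      _ = (c + x') + y' := by rw [← commK hcK x']
      _ = c + (x' + y') := cK1 hc hx' hy'
  have key2 : x + y' = c + (x' + y') := by
    calc x + y' = (c + x') + y' := by rw [← ex]
      _ = c + (x' + y') := cK1 hc hx' hy'
  refine ⟨?_, ?_, ?_⟩
  · -- (-c + x) + y = -c + (x + y)
    rw [exy, ip2 hcK]
  · -- (x + -c) + y = x + (-c + y)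
    rw [exc, key1, key2]
  · -- (x + y) + -c = x + (y + -c)
    rw [← negComm hcK (x + y), exy, ip2 hcK, eyc, key1, key2]

end CenterK

section Nucleus
variable {Q : Type u} [NKLoop Q] {a b : Q}

private lemma n1 (ha : inNucleus a) (x y : Q) : (a + x) + y = a + (x + y) :=
  (ha x y).1
private lemma n2 (ha : inNucleus a) (x y : Q) : (x + a) + y = x + (a + y) :=
  (ha x y).2.1
private lemma n3 (ha : inNucleus a) (x y : Q) : (x + y) + a = x + (y + a) :=
  (ha x y).2.2

private lemma nIp1 (ha : inNucleus a) (t : Q) : a + (-a + t) = t := by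
  rw [← n1 ha (-a) t, lan, lza]
private lemma nIp2 (ha : inNucleus a) (t : Q) : -a + (a + t) = t := by
  rw [← n2 ha (-a) t, lna, lza]
private lemma nIp3 (ha : inNucleus a) (t : Q) : (t + a) + -a = t := by
  rw [n2 ha t (-a), lan, laz]
private lemma nIp4 (ha : inNucleus a) (t : Q) : (t + -a) + a = t := by
  rw [n3 ha t (-a), lna, laz]

private lemma nAdd (ha : inNucleus a) (hb : inNucleus b) : inNucleus (a + b) := by
  intro x y
  refine ⟨?_, ?_, ?_⟩
  · rw [n1 ha b x, n1 ha (b + x) y, n1 hb x y, n1 ha b (x + y)]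
  · rw [← n2 ha x b, n2 hb (x + a) y, n2 ha x (b + y), n1 ha b y]
  · rw [← n2 ha (x + y) b, n3 ha x y, n3 hb x (y + a), n2 ha y b]

private lemma nNeg (ha : inNucleus a) : inNucleus (-a) := by
  intro x y
  refine ⟨?_, ?_, ?_⟩
  · -- (-a + x) + y = -a + (x + y)
    apply cancel_left (a := a)
    rw [← n1 ha (-a + x) y, nIp1 ha x, nIp1 ha (x + y)]
  · -- (x + -a) + y = x + (-a + y)
    have ey : y = a + (-a + y) := (nIp1 ha y).symm
    calc (x + -a) + y = (x + -a) + (a + (-a + y)) := by rw [← ey]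
      _ = ((x + -a) + a) + (-a + y) := (n2 ha (x + -a) (-a + y)).symm
      _ = x + (-a + y) := by rw [nIp4 ha x]
  · -- (x + y) + -a = x + (y + -a)
    apply cancel_right (a := a)
    rw [n3 ha (x + y) (-a), lna, laz, n3 ha x (y + -a), nIp4 ha y]

end Nucleus

section Central
variable {Q : Type u} [NKLoop Q]

/-- full centrality -/
private def IsCentral (z : Q) : Prop := inNucleus z ∧ ∀ t : Q, z + t = t + z

private lemma centralAdd {z z' : Q} (hz : IsCentral z) (hz' : IsCentral z') :
    IsCentral (z + z') := by
  refine ⟨nAdd hz.1 hz'.1, fun t => ?_⟩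
  rw [n1 hz.1 z' t, hz'.2 t, ← n1 hz.1 t z', hz.2 t, n3 hz'.1 t z]

/-- moving two central elements out of a sum -/
private lemma fz {z z' : Q} (hz : IsCentral z) (hz' : IsCentral z') (a b : Q) :
    (z + a) + (z' + b) = (z + z') + (a + b) := by
  calc (z + a) + (z' + b) = z + (a + (z' + b)) := n1 hz.1 a (z' + b)
    _ = z + ((a + z') + b) := by rw [n2 hz'.1 a b]
    _ = z + ((z' + a) + b) := by rw [← hz'.2 a]
    _ = z + (z' + (a + b)) := by rw [n1 hz'.1 a b]
    _ = (z + z') + (a + b) := (n1 hz.1 z' (a + b)).symm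

end Central

section Core
variable {Q : Type u} [NKLoop Q]

/-- the central associativity lemma for values at a Moufang-center point -/
private lemma core {v : Q} (hv : inMoufangCenter v) {f g h : Q → Q}
    (hf : IsSpecial f) (hg : IsSpecial g) (hh : IsSpecial h) :
    f v + (g v + h v) = (f v + g v) + h v := by
  obtain ⟨m₁, hm₁⟩ := hf.2.2.1
  obtain ⟨m₂, hm₂⟩ := hg.2.2.1
  obtain ⟨m₃, hm₃⟩ := hh.2.2.1
  have hc1 := hm₁ v hv
  have hc2 := hm₂ v hv
  have hc3 := hm₃ v hv
  set c1 := zsmulL m₁ v + f v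
  set c2 := zsmulL m₂ v + g v
  set c3 := zsmulL m₃ v + h v
  set p := -(zsmulL m₁ v) with hpdef
  set q := -(zsmulL m₂ v) with hqdef
  set r := -(zsmulL m₃ v) with hrdef
  have hp : inMoufangCenter p := negK (zsmulK hv m₁)
  have hq : inMoufangCenter q := negK (zsmulK hv m₂)
  have hr : inMoufangCenter r := negK (zsmulK hv m₃)
  have ef : f v = p + c1 := (ip2 (zsmulK hv m₁) (f v)).symm
  have eg : g v = q + c2 := (ip2 (zsmulK hv m₂) (g v)).symm
  have eh : h v = r + c3 := (ip2 (zsmulK hv m₃) (h v)).symm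
  -- power associativity
  have hpow : p + (q + r) = (p + q) + r := by
    rw [hpdef, hqdef, hrdef, ← zsmulNeg v m₁, ← zsmulNeg v m₂, ← zsmulNeg v m₃,
      powAdd hv (-m₂) (-m₃), powAdd hv (-m₁) (-m₂),
      powAdd hv (-m₁) (-m₂ + -m₃), powAdd hv (-m₁ + -m₂) (-m₃)]
    congr 1; ring
  have hqr : inMoufangCenter (q + r) := closureK hq hr
  have hpq : inMoufangCenter (p + q) := closureK hp hq
  have hpc1 : inMoufangCenter (p + c1) := closureK hp hc1.1
  have eab : (p + c1) + (q + c2) = ((p + q) + c1) + c2 := by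
    calc (p + c1) + (q + c2) = ((p + c1) + q) + c2 := pullR hc2 hpc1 hq
      _ = ((p + q) + c1) + c2 := by rw [pull hc1 hp hq]
  have h1 : inMoufangCenter ((p + q) + c1) := closureK hpq hc1.1
  have h2 : inMoufangCenter (((p + q) + c1) + c2) := closureK h1 hc2.1
  have eabc : (((p + q) + c1) + c2) + (r + c3) = ((((p + q) + r) + c1) + c2) + c3 := by
    calc (((p + q) + c1) + c2) + (r + c3)
        = ((((p + q) + c1) + c2) + r) + c3 := pullR hc3 h2 hr
      _ = ((((p + q) + c1) + r) + c2) + c3 := by rw [pull hc2 h1 hr]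
      _ = ((((p + q) + r) + c1) + c2) + c3 := by rw [pull hc1 hpq hr]
  have ebc : (q + c2) + (r + c3) = ((q + r) + c2) + c3 := by
    calc (q + c2) + (r + c3) = ((q + c2) + r) + c3 := pullR hc3 (closureK hq hc2.1) hr
      _ = ((q + r) + c2) + c3 := by rw [pull hc2 hq hr]
  have h3 : inMoufangCenter ((q + r) + c2) := closureK hqr hc2.1
  have ebca : (p + c1) + (((q + r) + c2) + c3) = (((p + (q + r)) + c1) + c2) + c3 := by
    calc (p + c1) + (((q + r) + c2) + c3)
        = ((p + c1) + ((q + r) + c2)) + c3 := pullR hc3 hpc1 h3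
      _ = (((p + c1) + (q + r)) + c2) + c3 := by rw [pullR hc2 hpc1 hqr]
      _ = (((p + (q + r)) + c1) + c2) + c3 := by rw [pull hc1 hp hqr]
  rw [ef, eg, eh, ebc, ebca, hpow, eab, eabc]

end Core

section Assembly
variable {Q : Type u} [NKLoop Q]

private lemma negSpecial {f : Q → Q} (hf : IsSpecial f) :
    IsSpecial (fun x : Q => -(f x)) := by
  obtain ⟨hend, hK, ⟨m, hm⟩, hN⟩ := hf
  refine ⟨?_, fun x => negK (hK x), ⟨-m, fun x hx => ?_⟩, fun x hx => nNeg (hN x hx)⟩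
  · intro x y
    show -(f (x + y)) = -(f x) + -(f y)
    rw [hend x y, negAdd (hK x) (hK y)]
  · show inCenterOfK (zsmulL (-m) x + -(f x))
    rw [zsmulNeg x m, ← negAdd (zsmulK hx m) (hK x)]
    exact negCenterK (hm x hx)

private lemma goal1 {f g h : Q → Q} (hf : IsSpecial f) (hg : IsSpecial g)
    (hh : IsSpecial h) (x : Q) : f x + (g x + h x) = (f x + g x) + h x := by
  obtain ⟨u, v, hu, hv, hx1, -⟩ := NKLoop.nk_decomp x
  have efx : f x = f u + f v := by rw [hx1]; exact hf.1 u v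
  have egx : g x = g u + g v := by rw [hx1]; exact hg.1 u v
  have ehx : h x = h u + h v := by rw [hx1]; exact hh.1 u v
  have hzf : IsCentral (f u) := ⟨hf.2.2.2 u hu, fun t => commK (hf.2.1 u) t⟩
  have hzg : IsCentral (g u) := ⟨hg.2.2.2 u hu, fun t => commK (hg.2.1 u) t⟩
  have hzh : IsCentral (h u) := ⟨hh.2.2.2 u hu, fun t => commK (hh.2.1 u) t⟩
  rw [efx, egx, ehx]
  calc (f u + f v) + ((g u + g v) + (h u + h v))
      = (f u + f v) + ((g u + h u) + (g v + h v)) := by rw [fz hzg hzh]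
    _ = (f u + (g u + h u)) + (f v + (g v + h v)) := fz hzf (centralAdd hzg hzh) _ _
    _ = ((f u + g u) + h u) + ((f v + g v) + h v) := by
        rw [← n1 hzf.1 (g u) (h u), core hv hf hg hh]
    _ = ((f u + g u) + (f v + g v)) + (h u + h v) := (fz (centralAdd hzf hzg) hzh _ _).symm
    _ = ((f u + f v) + (g u + g v)) + (h u + h v) := by rw [← fz hzf hzg]

end Assembly


/- STATEMENT 8: Lemma 3.1(3),(4).  For special endomorphisms `f, g, h` of an
   NK-loop: `f + (g + h) = (f + g) + h`; moreover `-f` is special,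
   `f + (-f) = 0`, and `f + 0 = f`. -/
theorem special_add_assoc_neg {Q : Type u} [NKLoop Q] (f g h : Q → Q)
    (hf : IsSpecial f) (hg : IsSpecial g) (hh : IsSpecial h) :
    ((fun x : Q => f x + (g x + h x)) = (fun x : Q => (f x + g x) + h x)) ∧
    IsSpecial (fun x : Q => -(f x)) ∧
    ((fun x : Q => f x + -(f x)) = (fun _ : Q => (0 : Q))) ∧
    ((fun x : Q => f x + (0 : Q)) = f) := by
  refine ⟨funext (goal1 hf hg hh), negSpecial hf, funext fun x => lan (f x),
    funext fun x => laz (f x)⟩
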